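/- Let f be a real-valued function on [a,b], r ≥ 0 a real number, and E ⊆ [a,b] a set such that f is differentiable at each point x of E with |f'(x)| ≤ r. Then the Lebesgue outer measure of f(E) is at most r times the Lebesgue outer measure of E. -/

import Mathlib

open MeasureTheory Set
open scoped NNReal ENNReal

/-- Saks' inequality: if `f : [a,b] → ℝ` is differentiable at every point `x` of
`E ⊆ [a,b]` with `|f'(x)| ≤ r`, then `m*(f(E)) ≤ r · m*(E)`. -/
theorem saks_inequality (a b r : ℝ) (hr : 0 ≤ r) (f f' : ℝ → ℝ) (E : Set ℝ)
    (hE : E ⊆ Icc a b)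
    (hderiv : ∀ x ∈ E, HasDerivWithinAt f (f' x) (Icc a b) x)
    (hbound : ∀ x ∈ E, |f' x| ≤ r) :
    volume (f '' E) ≤ ENNReal.ofReal r * volume E := by
  rcases E.eq_empty_or_nonempty with rfl | hne
  · simp
  set μ : Measure ℝ := volume
  have hEfin : μ E < ⊤ :=
    lt_of_le_of_lt (measure_mono hE) (by show volume (Icc a b) < ⊤; rw [Real.volume_Icc]; exact ENNReal.ofReal_lt_top)
  set g' : ℝ → (ℝ →L[ℝ] ℝ) := fun x => (1 : ℝ →L[ℝ] ℝ).smulRight (f' x) with hg'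
  have hf'E : ∀ x ∈ E, HasFDerivWithinAt f (g' x) E x := fun x hx =>
    ((hderiv x hx).mono hE).hasFDerivWithinAt
  -- main estimate with an epsilon of room
  have key : ∀ ε : ℝ≥0, 0 < ε → μ (f '' E) ≤ (r.toNNReal + ε) * μ E := by
    intro ε εpos
    have hA : ∀ A : ℝ →L[ℝ] ℝ, ∃ δ : ℝ≥0, 0 < δ ∧
        ∀ (t : Set ℝ), ApproximatesLinearOn f A t δ →
          μ (f '' t) ≤ (Real.toNNReal |A.det| + ε : ℝ≥0) * μ t := by
      intro A
      have I : ENNReal.ofReal |A.det| < (Real.toNNReal |A.det| + ε : ℝ≥0) := by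
        simp only [ENNReal.ofReal, lt_add_iff_pos_right, εpos, ENNReal.coe_lt_coe]
      rcases ((MeasureTheory.addHaar_image_le_mul_of_det_lt μ A I).and
        self_mem_nhdsWithin).exists with ⟨δ, h, h'⟩
      exact ⟨δ, h', fun t ht => h t f ht⟩
    choose δ hδ using hA
    obtain ⟨t, A, t_disj, t_meas, t_cover, ht, Af'⟩ :
        ∃ (t : ℕ → Set ℝ) (A : ℕ → ℝ →L[ℝ] ℝ),
          Pairwise (Function.onFun Disjoint t) ∧ (∀ n : ℕ, MeasurableSet (t n)) ∧
            (E ⊆ ⋃ n : ℕ, t n) ∧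
              (∀ n : ℕ, ApproximatesLinearOn f (A n) (E ∩ t n) (δ (A n))) ∧
                (E.Nonempty → ∀ n, ∃ y ∈ E, A n = g' y) :=
      exists_partition_approximatesLinearOn_of_hasFDerivWithinAt f E g' hf'E δ
        fun A => (hδ A).1.ne'
    have hdet : ∀ n, (Real.toNNReal |(A n).det| : ℝ≥0) ≤ r.toNNReal := by
      intro n
      obtain ⟨y, hy, hAy⟩ := Af' hne n
      have : (A n).det = f' y := by rw [hAy, hg']; simp [ContinuousLinearMap.det_smulRight]
      rw [this]
      exact Real.toNNReal_le_toNNReal (hbound y hy)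
    calc
      μ (f '' E) ≤ μ (⋃ n, f '' (E ∩ t n)) := by
        apply measure_mono
        rw [← image_iUnion, ← inter_iUnion]
        exact image_mono (subset_inter Subset.rfl t_cover)
      _ ≤ ∑' n, μ (f '' (E ∩ t n)) := measure_iUnion_le _
      _ ≤ ∑' n, ((Real.toNNReal |(A n).det| + ε : ℝ≥0) : ℝ≥0∞) * μ (E ∩ t n) :=
        ENNReal.tsum_le_tsum fun n => (hδ (A n)).2 _ (ht n)
      _ ≤ ∑' n, ((r.toNNReal + ε : ℝ≥0) : ℝ≥0∞) * μ (E ∩ t n) := by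
        refine ENNReal.tsum_le_tsum fun n => mul_le_mul_left ?_ _
        exact_mod_cast add_le_add_left (hdet n) ε
      _ = ((r.toNNReal + ε : ℝ≥0) : ℝ≥0∞) * ∑' n, μ (E ∩ t n) := ENNReal.tsum_mul_left
      _ ≤ ((r.toNNReal + ε : ℝ≥0) : ℝ≥0∞) * μ E := by
        refine mul_le_mul_right ?_ _
        have h1 : ∀ n, μ (E ∩ t n) = μ.restrict E (t n) := by
          intro n
          rw [Measure.restrict_apply (t_meas n), inter_comm]
        simp_rw [h1]
        rw [← measure_iUnion t_disj t_meas]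
        exact (measure_mono (subset_univ _)).trans (by rw [Measure.restrict_apply_univ])
  -- pass to the limit ε → 0
  have hr' : ENNReal.ofReal r * μ E = (r.toNNReal : ℝ≥0∞) * μ E := by
    rw [ENNReal.ofReal]
  rw [hr']
  refine ENNReal.le_of_forall_pos_le_add fun ε εpos _ => ?_
  rcases eq_or_ne (μ E) 0 with h0 | h0
  · have := key 1 one_pos
    rw [h0, mul_zero] at this
    exact this.trans (by simp)
  · set c : ℝ≥0 := (μ E).toNNReal with hc
    have hcpos : 0 < c := by
      rw [hc]
      exact ENNReal.toNNReal_pos h0 hEfin.ne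
    have hμE : μ E = (c : ℝ≥0∞) := (ENNReal.coe_toNNReal hEfin.ne).symm
    have := key (ε / c) (by positivity)
    refine this.trans ?_
    rw [hμE]
    push_cast
    rw [add_mul]
    gcongr
    rw [← ENNReal.coe_mul, div_mul_cancel₀ _ hcpos.ne']
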